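/- arXiv:2006.13914 — 2 statements merged into one kernel-verified Lean document; each statement's English description precedes it below -/
import Mathlib

section
/- Let H⁻ₓ, H⁻ᵥ and H⁺ₓ, H⁺ᵥ be real linear maps from ℝ^n and ℝ respectively to ℝ^m, and let h⁻, h⁺ ∈ ℝ^m. For r ∈ ℝ, r ≠ 0, and y ∈ ℝ, define the dynamic maximal admissible set O(r, y) ⊆ ℝ^n × ℝ by: if y ≤ r and r > 0, O(r,y) = {(x,v) : H⁻ₓx + H⁻ᵥv ≤ r·h⁻}; if y > r and r > 0, O(r,y) = {(x,v) : H⁺ₓx + H⁺ᵥv ≥ r·h⁺}; if y ≤ r and r < 0, O(r,y) = {(x,v) : H⁺ₓx + H⁺ᵥv ≤ r·h⁺}; if y > r and r < 0, O(r,y) = {(x,v) : H⁻ₓx + H⁻ᵥv ≥ r·h⁻}. Then for every α > 0, O(αr, αy) = α·O(r, y), where α·S = {(αx, αv) : (x,v) ∈ S}. (The homogeneity of the dynamic maximal admissible set of Table I, the key step in the proof of Theorem 2.) -/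
open Pointwise

lemma smul_set_le {n m : ℕ} (A : (Fin n → ℝ) →ₗ[ℝ] (Fin m → ℝ))
    (B : ℝ →ₗ[ℝ] (Fin m → ℝ)) (c : Fin m → ℝ) (r α : ℝ) (hα : 0 < α) :
    {xv : (Fin n → ℝ) × ℝ | A xv.1 + B xv.2 ≤ (α * r) • c} =
      α • {xv : (Fin n → ℝ) × ℝ | A xv.1 + B xv.2 ≤ r • c} := by
  ext ⟨x, v⟩
  rw [Set.mem_smul_set_iff_inv_smul_mem₀ hα.ne']
  simp only [Set.mem_setOf_eq, Prod.smul_fst, Prod.smul_snd, map_smul]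
  constructor
  · intro h i
    have := h i
    simp only [Pi.add_apply, Pi.smul_apply, smul_eq_mul] at this ⊢
    rw [inv_mul_eq_div, inv_mul_eq_div, ← add_div, div_le_iff₀ hα]
    linarith
  · intro h i
    have := h i
    simp only [Pi.add_apply, Pi.smul_apply, smul_eq_mul] at this ⊢
    rw [inv_mul_eq_div, inv_mul_eq_div, ← add_div, div_le_iff₀ hα] at this
    linarith

lemma smul_set_ge {n m : ℕ} (A : (Fin n → ℝ) →ₗ[ℝ] (Fin m → ℝ))
    (B : ℝ →ₗ[ℝ] (Fin m → ℝ)) (c : Fin m → ℝ) (r α : ℝ) (hα : 0 < α) :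
    {xv : (Fin n → ℝ) × ℝ | (α * r) • c ≤ A xv.1 + B xv.2} =
      α • {xv : (Fin n → ℝ) × ℝ | r • c ≤ A xv.1 + B xv.2} := by
  ext ⟨x, v⟩
  rw [Set.mem_smul_set_iff_inv_smul_mem₀ hα.ne']
  simp only [Set.mem_setOf_eq, Prod.smul_fst, Prod.smul_snd, map_smul]
  constructor
  · intro h i
    have := h i
    simp only [Pi.add_apply, Pi.smul_apply, smul_eq_mul] at this ⊢
    rw [inv_mul_eq_div, inv_mul_eq_div, ← add_div, le_div_iff₀ hα]
    linarith
  · intro h i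
    have := h i
    simp only [Pi.add_apply, Pi.smul_apply, smul_eq_mul] at this ⊢
    rw [inv_mul_eq_div, inv_mul_eq_div, ← add_div, le_div_iff₀ hα] at this
    linarith

/-- Homogeneity of the dynamic maximal admissible set of Table I: for every `α > 0` and
`r ≠ 0`, `O(αr, αy) = α • O(r, y)`, where `O(r, y)` is given by the four cases of Table I
depending on the sign of `r` and on whether `y ≤ r` or `y > r`. -/
theorem stmt_14 {n m : ℕ}
    (Hxm Hxp : (Fin n → ℝ) →ₗ[ℝ] (Fin m → ℝ))
    (Hvm Hvp : ℝ →ₗ[ℝ] (Fin m → ℝ))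
    (hminus hplus : Fin m → ℝ)
    (O : ℝ → ℝ → Set ((Fin n → ℝ) × ℝ))
    (hO : ∀ r y : ℝ, r ≠ 0 → O r y =
      if 0 < r then
        (if y ≤ r then {xv : (Fin n → ℝ) × ℝ | Hxm xv.1 + Hvm xv.2 ≤ r • hminus}
         else {xv : (Fin n → ℝ) × ℝ | r • hplus ≤ Hxp xv.1 + Hvp xv.2})
      else
        (if y ≤ r then {xv : (Fin n → ℝ) × ℝ | Hxp xv.1 + Hvp xv.2 ≤ r • hplus}
         else {xv : (Fin n → ℝ) × ℝ | r • hminus ≤ Hxm xv.1 + Hvm xv.2})) :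
    ∀ r y : ℝ, r ≠ 0 → ∀ α : ℝ, 0 < α → O (α * r) (α * y) = α • O r y := by
  intro r y hr α hα
  have hαr : α * r ≠ 0 := mul_ne_zero hα.ne' hr
  rw [hO _ _ hαr, hO _ _ hr]
  have h1 : (0 < α * r) ↔ (0 < r) := ⟨fun h => by nlinarith, fun h => by nlinarith⟩
  have h2 : (α * y ≤ α * r) ↔ (y ≤ r) := mul_le_mul_iff_right₀ hα
  by_cases hp : 0 < r <;> by_cases hyr : y ≤ r <;>
    simp only [h1, h2, hp, hyr, if_true, if_false] <;>
    first
      | exact smul_set_le _ _ _ _ _ hα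
      | exact smul_set_ge _ _ _ _ _ hα
end

section
/- Let A be a real n×n matrix, b ∈ ℝ^n, and c ∈ ℝ^n a row output map (y_tr = cᵀx). Let O(r, y) ⊆ ℝ^n × ℝ be the dynamic maximal admissible set defined, for r ≠ 0, by the four cases of Table I: O(r,y) = {(x,v) : H⁻ₓx + H⁻ᵥv ≤ r·h⁻} if y ≤ r, r > 0; {(x,v) : H⁺ₓx + H⁺ᵥv ≥ r·h⁺} if y > r, r > 0; {(x,v) : H⁺ₓx + H⁺ᵥv ≤ r·h⁺} if y ≤ r, r < 0; {(x,v) : H⁻ₓx + H⁻ᵥv ≥ r·h⁻} if y > r, r < 0, where H⁻ₓ, H⁻ᵥ, H⁺ₓ, H⁺ᵥ are fixed linear maps into ℝ^m and h⁻, h⁺ ∈ ℝ^m. Given a reference sequence r : ℕ → ℝ with r(t) ≠ 0 for all t and initial conditions (x₀, v₀), define the governed trajectory by x(0) = x₀, v(−1) = v₀, κ(t) = sup({0} ∪ {κ ∈ [0,1] : (x(t), v(t−1) + κ(r(t) − v(t−1))) ∈ O(r(t), cᵀx(t))}), v(t) = v(t−1) + κ(t)(r(t) − v(t−1)), and x(t+1)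 = A x(t) + b v(t). Then for every α > 0, the governed trajectory corresponding to the scaled data (α·r, α·x₀, α·v₀) satisfies x_α(t) = α x(t), v_α(t) = α v(t), and κ_α(t) = κ(t) for all t; in particular the governed tracking output satisfies y_tr(t, αr, α(x₀,v₀)) = α · y_tr(t, r, (x₀,v₀)). (Theorem 2 of the paper: the RG-DC governed closed-loop system satisfies the homogeneity condition.) -/
open Matrix

/-- The RG-DC governed trajectory: `x 0 = x₀`; at each time `t`, with previous governed
reference `v(t−1)` (equal to `v₀` when `t = 0`), the governor picks
`κ(t) = sup ({0} ∪ {κ ∈ [0,1] : (x(t), v(t−1) + κ(r(t) − v(t−1))) ∈ O(r(t), cᵀx(t))})`,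
sets `v(t) = v(t−1) + κ(t)(r(t) − v(t−1))`, and the state evolves by
`x(t+1) = A x(t) + b v(t)`. -/
def IsRGDCTrajectory {n : ℕ} (A : Matrix (Fin n) (Fin n) ℝ) (b c : Fin n → ℝ)
    (O : ℝ → ℝ → Set ((Fin n → ℝ) × ℝ)) (r : ℕ → ℝ) (x₀ : Fin n → ℝ) (v₀ : ℝ)
    (x : ℕ → Fin n → ℝ) (v : ℕ → ℝ) (κ : ℕ → ℝ) : Prop :=
  x 0 = x₀ ∧
  (∀ t : ℕ, κ t = sSup ({0} ∪ {k : ℝ | k ∈ Set.Icc (0 : ℝ) 1 ∧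
      (x t, (if t = 0 then v₀ else v (t - 1))
        + k * (r t - (if t = 0 then v₀ else v (t - 1)))) ∈ O (r t) (c ⬝ᵥ x t)})) ∧
  (∀ t : ℕ, v t = (if t = 0 then v₀ else v (t - 1))
      + κ t * (r t - (if t = 0 then v₀ else v (t - 1)))) ∧
  (∀ t : ℕ, x (t + 1) = A.mulVec (x t) + v t • b)

/-- Theorem 2 of the paper (homogeneity of the RG-DC governed closed-loop system):
if `O` is the dynamic maximal admissible set of Table I, then scaling the reference and
the initial conditions by `α > 0` scales the governed state and governed reference by `α`
while leaving `κ` unchanged; in particular the governed tracking output satisfies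
`y_tr(t, αr, α(x₀,v₀)) = α · y_tr(t, r, (x₀,v₀))`. -/
theorem stmt_15 {n m : ℕ} (A : Matrix (Fin n) (Fin n) ℝ) (b c : Fin n → ℝ)
    (Hxm Hxp : (Fin n → ℝ) →ₗ[ℝ] (Fin m → ℝ))
    (Hvm Hvp : ℝ →ₗ[ℝ] (Fin m → ℝ))
    (hminus hplus : Fin m → ℝ)
    (O : ℝ → ℝ → Set ((Fin n → ℝ) × ℝ))
    (hO : ∀ ρ y : ℝ, ρ ≠ 0 → O ρ y =
      if 0 < ρ then
        (if y ≤ ρ then {xv : (Fin n → ℝ) × ℝ | Hxm xv.1 + Hvm xv.2 ≤ ρ • hminus}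
         else {xv : (Fin n → ℝ) × ℝ | ρ • hplus ≤ Hxp xv.1 + Hvp xv.2})
      else
        (if y ≤ ρ then {xv : (Fin n → ℝ) × ℝ | Hxp xv.1 + Hvp xv.2 ≤ ρ • hplus}
         else {xv : (Fin n → ℝ) × ℝ | ρ • hminus ≤ Hxm xv.1 + Hvm xv.2}))
    (r : ℕ → ℝ) (hr : ∀ t, r t ≠ 0)
    (x₀ : Fin n → ℝ) (v₀ : ℝ) (α : ℝ) (hα : 0 < α)
    (x xa : ℕ → Fin n → ℝ) (v va : ℕ → ℝ) (κ κa : ℕ → ℝ)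
    (htraj : IsRGDCTrajectory A b c O r x₀ v₀ x v κ)
    (htraja : IsRGDCTrajectory A b c O (fun t => α * r t) (α • x₀) (α * v₀) xa va κa) :
    ∀ t : ℕ, xa t = α • x t ∧ va t = α * v t ∧ κa t = κ t ∧
      c ⬝ᵥ xa t = α * (c ⬝ᵥ x t) := by
  obtain ⟨hx0, hκ, hv, hxs⟩ := htraj
  obtain ⟨hx0a, hκa, hva, hxsa⟩ := htraja
  have key : ∀ (x' : Fin n → ℝ) (w ρ y : ℝ), ρ ≠ 0 →
      ((α • x', α * w) ∈ O (α * ρ) (α * y) ↔ (x', w) ∈ O ρ y) := by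
    intro x' w ρ y hρ
    rw [hO _ _ (mul_ne_zero hα.ne' hρ), hO _ _ hρ]
    have h1 : (0 < α * ρ) ↔ (0 < ρ) := by
      constructor
      · intro h; nlinarith
      · intro h; positivity
    have h2 : (α * y ≤ α * ρ) ↔ (y ≤ ρ) := mul_le_mul_iff_right₀ hα
    have e1 : Hxm (α • x') + Hvm (α * w) = α • (Hxm x' + Hvm w) := by
      rw [show (α * w) = α • w from rfl, Hxm.map_smul, Hvm.map_smul, smul_add]
    have e2 : Hxp (α • x') + Hvp (α * w) = α • (Hxp x' + Hvp w) := by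
      rw [show (α * w) = α • w from rfl, Hxp.map_smul, Hvp.map_smul, smul_add]
    have e3 : (α * ρ) • hminus = α • (ρ • hminus) := mul_smul α ρ hminus
    have e4 : (α * ρ) • hplus = α • (ρ • hplus) := mul_smul α ρ hplus
    by_cases hp : 0 < ρ <;> by_cases hy : y ≤ ρ
    · rw [if_pos (h1.mpr hp), if_pos hp, if_pos (h2.mpr hy), if_pos hy]
      simp only [Set.mem_setOf_eq, e1, e3]
      exact smul_le_smul_iff_of_pos_left hα
    · rw [if_pos (h1.mpr hp), if_pos hp, if_neg ((not_congr h2).mpr hy), if_neg hy]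
      simp only [Set.mem_setOf_eq, e2, e4]
      exact smul_le_smul_iff_of_pos_left hα
    · rw [if_neg ((not_congr h1).mpr hp), if_neg hp, if_pos (h2.mpr hy), if_pos hy]
      simp only [Set.mem_setOf_eq, e2, e4]
      exact smul_le_smul_iff_of_pos_left hα
    · rw [if_neg ((not_congr h1).mpr hp), if_neg hp, if_neg ((not_congr h2).mpr hy), if_neg hy]
      simp only [Set.mem_setOf_eq, e1, e3]
      exact smul_le_smul_iff_of_pos_left hα
  have step : ∀ t : ℕ, xa t = α • x t →
      (if t = 0 then α * v₀ else va (t - 1)) = α * (if t = 0 then v₀ else v (t - 1)) →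
      κa t = κ t ∧ va t = α * v t := by
    intro t hxt hprev
    have hdot : c ⬝ᵥ xa t = α * (c ⬝ᵥ x t) := by
      rw [hxt, dotProduct_smul]; rfl
    have hset : {k : ℝ | k ∈ Set.Icc (0 : ℝ) 1 ∧
        (xa t, (if t = 0 then α * v₀ else va (t - 1))
          + k * ((fun t => α * r t) t - (if t = 0 then α * v₀ else va (t - 1))))
          ∈ O ((fun t => α * r t) t) (c ⬝ᵥ xa t)} =
        {k : ℝ | k ∈ Set.Icc (0 : ℝ) 1 ∧
        (x t, (if t = 0 then v₀ else v (t - 1))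
          + k * (r t - (if t = 0 then v₀ else v (t - 1)))) ∈ O (r t) (c ⬝ᵥ x t)} := by
      ext k
      simp only [Set.mem_setOf_eq, and_congr_right_iff]
      intro hk
      have harg : (if t = 0 then α * v₀ else va (t - 1))
          + k * ((fun t => α * r t) t - (if t = 0 then α * v₀ else va (t - 1)))
          = α * ((if t = 0 then v₀ else v (t - 1))
            + k * (r t - (if t = 0 then v₀ else v (t - 1)))) := by
        rw [hprev]; ring
      rw [hdot, hxt, harg]
      exact key _ _ _ _ (hr t)
    have hκeq : κa t = κ t := by rw [hκa t, hκ t, hset]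
    refine ⟨hκeq, ?_⟩
    rw [hva t, hv t, hprev, hκeq]; ring
  have main : ∀ t : ℕ, xa t = α • x t ∧ va t = α * v t := by
    intro t
    induction t with
    | zero =>
      have hx : xa 0 = α • x 0 := by rw [hx0a, hx0]
      exact ⟨hx, (step 0 hx (by simp)).2⟩
    | succ t ih =>
      have hx : xa (t + 1) = α • x (t + 1) := by
        rw [hxsa t, hxs t, ih.1, ih.2, Matrix.mulVec_smul, smul_add, smul_smul]
      refine ⟨hx, (step (t + 1) hx ?_).2⟩
      simp only [Nat.succ_ne_zero, if_false, Nat.add_sub_cancel]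
      exact ih.2
  intro t
  have hx := (main t).1
  have hprev : (if t = 0 then α * v₀ else va (t - 1)) = α * (if t = 0 then v₀ else v (t - 1)) := by
    cases t with
    | zero => simp
    | succ t => simp only [Nat.succ_ne_zero, if_false, Nat.add_sub_cancel]; exact (main t).2
  have hs := step t hx hprev
  exact ⟨hx, hs.2, hs.1, by rw [hx, dotProduct_smul]; rfl⟩
end
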